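/- Let m ≥ 1, D ≥ 1, and let D₀ be any set of Dyck words of length 2m each of height at most D. Then the set {1·w : w ∈ D₀} of binary words of length 2m+1 is mutually uncorrelated and every word in it has (D+1)-bounded running digital sum ((D+1)-BRDS). -/
import Mathlib


/-- The four-letter DNA alphabet. -/
inductive DNA | A | T | G | C
deriving DecidableEq

/-- Hamming distance between two words (of equal length) given as lists. -/
def hammingD {α : Type*} [DecidableEq α] (x y : List α) : ℕ :=
  (x.zip y).countP (fun p => decide (p.1 ≠ p.2))

/-- A binary word has `D`-bounded running digital sum if in every prefix the
numbers of ones and zeros differ by at most `D`. -/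
def brds (D : ℕ) (w : List Bool) : Prop :=
  ∀ k ≤ w.length,
    (((w.take k).count true : ℤ) - ((w.take k).count false : ℤ)).natAbs ≤ D

/-- The letters `G`, `C` of the DNA alphabet. -/
def isGC : DNA → Bool
  | DNA.G => true
  | DNA.C => true
  | _ => false

/-- A DNA word is `D`-GC-prefix-balanced if in every prefix the number of
letters from {G,C} and the number of letters from {A,T} differ by at most `D`. -/
def gcpb (D : ℕ) (w : List DNA) : Prop :=
  ∀ k ≤ w.length,
    (((w.take k).countP isGC : ℤ) - ((w.take k).countP (fun c => !(isGC c)) : ℤ)).natAbs ≤ D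

/-- A word is self-uncorrelated if no proper nonempty prefix equals the suffix
of the same length. -/
def selfUncorr {α : Type*} (w : List α) : Prop :=
  ∀ k, 1 ≤ k → k ≤ w.length - 1 → w.take k ≠ w.drop (w.length - k)

/-- A set of words is mutually uncorrelated if every word is self-uncorrelated
and for every ordered pair of distinct words `x`, `y` no nonempty prefix of `y`
equals a suffix of `x` of the same length. -/
def mutUncorr {α : Type*} (S : Set (List α)) : Prop :=
  (∀ w ∈ S, selfUncorr w) ∧
  ∀ x ∈ S, ∀ y ∈ S, x ≠ y →
    ∀ k, 1 ≤ k → k ≤ x.length → y.take k ≠ x.drop (x.length - k)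

/-- A Dyck word: equal numbers of ones and zeros, and every prefix has at least
as many ones as zeros. -/
def isDyck (w : List Bool) : Prop :=
  w.count true = w.count false ∧
  ∀ k ≤ w.length, (w.take k).count false ≤ (w.take k).count true

/-- The height of a (Dyck) word is at most `D`: in every prefix the number of
ones exceeds the number of zeros by at most `D`. -/
def heightLe (D : ℕ) (w : List Bool) : Prop :=
  ∀ k ≤ w.length, ((w.take k).count true : ℤ) - ((w.take k).count false : ℤ) ≤ (D : ℤ)


lemma dyck_take (w : List Bool) (hd : isDyck w) (k : ℕ) :
    (w.take k).count false ≤ (w.take k).count true := by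
  rcases le_or_gt k w.length with hk | hk
  · exact hd.2 k hk
  · have h := hd.2 w.length le_rfl
    rw [List.take_of_length_le hk.le]
    simpa using h

lemma dyck_drop (w : List Bool) (hd : isDyck w) (j : ℕ) :
    (w.drop j).count true ≤ (w.drop j).count false := by
  have h1 := dyck_take w hd j
  have ct : w.count true = (w.take j).count true + (w.drop j).count true := by
    conv_lhs => rw [← List.take_append_drop j w]
    rw [List.count_append]
  have cf : w.count false = (w.take j).count false + (w.drop j).count false := by
    conv_lhs => rw [← List.take_append_drop j w]
    rw [List.count_append]
  have := hd.1
  omega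

lemma cons_take_pos (w : List Bool) (hd : isDyck w) (k : ℕ) (hk : 1 ≤ k) :
    ((true :: w).take k).count false < ((true :: w).take k).count true := by
  obtain ⟨j, rfl⟩ : ∃ j, k = j + 1 := ⟨k - 1, by omega⟩
  rw [List.take_succ_cons]
  have := dyck_take w hd j
  simp [List.count_cons]
  omega

lemma cons_drop (w : List Bool) (k : ℕ) (hk : k ≤ w.length) :
    (true :: w).drop ((true :: w).length - k) = w.drop (w.length - k) := by
  simp only [List.length_cons]
  have h : w.length + 1 - k = (w.length - k) + 1 := by omega
  rw [h, List.drop_succ_cons]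

/-- prepending a one to every Dyck word of length `2m` of height
at most `D` yields a mutually uncorrelated set of binary words each with
`(D+1)`-bounded running digital sum. -/
theorem stmt7 (m D : ℕ) (hm : 1 ≤ m) (hD : 1 ≤ D) (D0 : Set (List Bool))
    (hD0 : ∀ w ∈ D0, w.length = 2 * m ∧ isDyck w ∧ heightLe D w) :
    mutUncorr ((fun w => true :: w) '' D0) ∧
    ∀ v ∈ (fun w => true :: w) '' D0, brds (D + 1) v := by
  constructor
  · constructor
    · rintro v ⟨w, hw, rfl⟩ k hk1 hk2 heq
      obtain ⟨hlen, hd, hh⟩ := hD0 w hw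
      simp only [List.length_cons] at hk2
      have h1 := cons_take_pos w hd k hk1
      have h2 := dyck_drop w hd (w.length - k)
      rw [heq, cons_drop w k (by omega)] at h1
      omega
    · rintro x ⟨wx, hwx, rfl⟩ y ⟨wy, hwy, rfl⟩ hne k hk1 hk2 heq
      obtain ⟨hlx, hdx, _⟩ := hD0 wx hwx
      obtain ⟨hly, hdy, _⟩ := hD0 wy hwy
      simp only [List.length_cons] at hk2
      rcases le_or_gt k wx.length with hk | hk
      · have h1 := cons_take_pos wy hdy k hk1
        have h2 := dyck_drop wx hdx (wx.length - k)
        rw [heq, cons_drop wx k hk] at h1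
        omega
      · have hkeq : k = wx.length + 1 := by omega
        have hylen : (true :: wy).length = k := by
          simp [hkeq, hlx, hly]
        rw [List.take_of_length_le hylen.le] at heq
        simp only [List.length_cons, hkeq] at heq
        simp at heq
        exact hne (by simp [heq])
  · rintro v ⟨w, hw, rfl⟩ k hk
    obtain ⟨hlen, hd, hh⟩ := hD0 w hw
    rcases Nat.eq_zero_or_pos k with rfl | hk1
    · simp
    · obtain ⟨j, rfl⟩ : ∃ j, k = j + 1 := ⟨k - 1, by omega⟩
      simp only [List.length_cons] at hk
      rw [List.take_succ_cons]
      have h1 := dyck_take w hd j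
      have h2 := hh j (by omega)
      have h3 : (w.take j).count false ≤ (w.take j).count true := h1
      simp only [List.count_cons]
      simp
      omega
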